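/- arXiv:2111.05411 — 3 statements merged into one kernel-verified Lean document; each statement's English description precedes it below -/
import Mathlib

section
/- Let R be a rational function with a simple zero of R' at β_i (R'(β_i)=0, R''(β_i)≠0), and suppose R'''(z)/R'(z) - (R''(z)/R'(z))^2 = -∑_j 1/(z-β_j)^2 + 2∑_k 1/(z+ε_k)^2 for all z distinct from the β_j and −ε_k. Then R''''(β_i)/(3R''(β_i)) - R'''(β_i)^2/(4R''(β_i)^2) = -∑_{j≠i} 1/(β_i-β_j)^2 + 2∑_k 1/(β_i+ε_k)^2. -/
open Finset Filter Topology

private lemma iteratedDeriv_eq_coeff {f : ℂ → ℂ} {p : FormalMultilinearSeries ℂ ℂ ℂ} {x : ℂ}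
    (hp : HasFPowerSeriesAt f p x) (n : ℕ) :
    iteratedDeriv n f x = (n.factorial : ℂ) * p.coeff n := by
  obtain ⟨r, hr⟩ := hp
  have h := hr.factorial_smul (1 : ℂ) n
  rw [iteratedDeriv_eq_iteratedFDeriv, ← h, nsmul_eq_mul]
  rfl

private lemma analyticAt_deriv {f : ℂ → ℂ} {x : ℂ} (h : AnalyticAt ℂ f x) :
    AnalyticAt ℂ (deriv f) x := by
  obtain ⟨p, r, hp⟩ := h.fderiv
  have := ((ContinuousLinearMap.apply ℂ ℂ (1 : ℂ)).comp_hasFPowerSeriesOnBall hp).analyticAt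
  exact this.congr (Filter.Eventually.of_forall fun y => rfl)

/-- The constant term of the Laurent expansion at a simple ramification point:
`R''''(β_i)/(3R''(β_i)) - R'''(β_i)²/(4R''(β_i)²)
  = -∑_{j≠i} 1/(β_i-β_j)² + 2∑_k 1/(β_i+ε_k)²`. -/
theorem stmt_4 (d : ℕ) (β : Fin (2 * d) → ℂ) (ε : Fin d → ℂ) (R : ℂ → ℂ)
    (i : Fin (2 * d))
    (hβinj : Function.Injective β) (hβε : ∀ j k, β j ≠ -ε k)
    (hana : AnalyticAt ℂ R (β i))
    (h1 : deriv R (β i) = 0) (h2 : iteratedDeriv 2 R (β i) ≠ 0)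
    (H : ∀ z : ℂ, (∀ j, z ≠ β j) → (∀ k, z ≠ -ε k) →
      iteratedDeriv 3 R z / deriv R z - (iteratedDeriv 2 R z / deriv R z) ^ 2
        = -(∑ j, 1 / (z - β j) ^ 2) + 2 * ∑ k, 1 / (z + ε k) ^ 2) :
    iteratedDeriv 4 R (β i) / (3 * iteratedDeriv 2 R (β i))
        - (iteratedDeriv 3 R (β i)) ^ 2 / (4 * (iteratedDeriv 2 R (β i)) ^ 2)
      = -(∑ j ∈ Finset.univ.filter (fun j => j ≠ i), 1 / (β i - β j) ^ 2)
          + 2 * ∑ k, 1 / (β i + ε k) ^ 2 := by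
  classical
  set b : ℂ := β i with hbdef
  set g : ℂ → ℂ := deriv R with hgdef
  obtain ⟨p, hp⟩ := analyticAt_deriv hana
  have hgana : AnalyticAt ℂ g b := ⟨p, hp⟩
  set h : ℂ → ℂ := dslope g b with hhdef
  have hph : HasFPowerSeriesAt h p.fslope b := hp.has_fpower_series_dslope_fslope
  have hhana : AnalyticAt ℂ h b := ⟨_, hph⟩
  -- translations of iterated derivatives of R
  have i2 : iteratedDeriv 2 R = deriv g := by
    rw [show (2:ℕ) = 1 + 1 from rfl, iteratedDeriv_succ, iteratedDeriv_one]
  have i3 : iteratedDeriv 3 R = deriv (deriv g) := by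
    rw [show (3:ℕ) = 2 + 1 from rfl, iteratedDeriv_succ, i2]
  have iR3 : iteratedDeriv 3 R b = iteratedDeriv 2 g b := by
    rw [show (3:ℕ) = 2 + 1 from rfl, iteratedDeriv_succ']
  have iR4 : iteratedDeriv 4 R b = iteratedDeriv 3 g b := by
    rw [show (4:ℕ) = 3 + 1 from rfl, iteratedDeriv_succ']
  -- values of h and its derivatives at b
  have hhb : h b = iteratedDeriv 2 R b := by
    rw [hhdef, dslope_same, i2]
  have hb0 : h b ≠ 0 := hhb ▸ h2
  have e_h1 : deriv h b = p.coeff 2 := by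
    have := iteratedDeriv_eq_coeff hph 1
    simpa [iteratedDeriv_one, FormalMultilinearSeries.coeff_fslope] using this
  have e_h2 : deriv (deriv h) b = 2 * p.coeff 3 := by
    have := iteratedDeriv_eq_coeff hph 2
    rw [show (2:ℕ) = 1 + 1 from rfl, iteratedDeriv_succ, iteratedDeriv_one] at this
    simpa [FormalMultilinearSeries.coeff_fslope, Nat.factorial] using this
  have e_R3 : iteratedDeriv 3 R b = 2 * p.coeff 2 := by
    rw [iR3, iteratedDeriv_eq_coeff hp 2]; norm_num [Nat.factorial]
  have e_R4 : iteratedDeriv 4 R b = 6 * p.coeff 3 := by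
    rw [iR4, iteratedDeriv_eq_coeff hp 3]; norm_num [Nat.factorial]
  -- global factorization g = (z - b) * h
  have hgz : ∀ z, g z = (z - b) * h z := by
    intro z
    rcases eq_or_ne z b with rfl | hz
    · simp [h1]
    · rw [hhdef, dslope_of_ne _ hz, slope_def_field, h1]
      field_simp [sub_ne_zero.mpr hz]
      rw [sub_zero]
  have hgfun : g = fun z => (z - b) * h z := funext hgz
  -- eventual derivative formulas
  have hEh : ∀ᶠ z in 𝓝 b, AnalyticAt ℂ h z := hhana.eventually_analyticAt
  have E1 : ∀ᶠ z in 𝓝 b, deriv g z = h z + (z - b) * deriv h z := by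
    filter_upwards [hEh] with z hz
    have Hd : HasDerivAt (fun w => (w - b) * h w) (1 * h z + (z - b) * deriv h z) z :=
      ((hasDerivAt_id z).sub_const b).mul hz.differentiableAt.hasDerivAt
    rw [hgfun, Hd.deriv]; ring
  have E2 : ∀ᶠ z in 𝓝 b, deriv (deriv g) z = 2 * deriv h z + (z - b) * deriv (deriv h) z := by
    filter_upwards [hEh, E1.eventually_nhds] with z hz hz1
    rw [Filter.EventuallyEq.deriv_eq hz1]
    have Hd : HasDerivAt (fun w => h w + (w - b) * deriv h w)
        (deriv h z + (1 * deriv h z + (z - b) * deriv (deriv h) z)) z :=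
      hz.differentiableAt.hasDerivAt.add
        (((hasDerivAt_id z).sub_const b).mul
          (analyticAt_deriv hz).differentiableAt.hasDerivAt)
    rw [Hd.deriv]; ring
  have E3 : ∀ᶠ z in 𝓝 b, h z ≠ 0 := hhana.continuousAt.eventually_ne hb0
  have hne1 : ∀ᶠ z in 𝓝 b, ∀ j, j ≠ i → z ≠ β j := by
    rw [Filter.eventually_all]
    intro j
    rcases eq_or_ne j i with rfl | hj
    · filter_upwards with z hc; exact absurd rfl hc
    · filter_upwards [eventually_ne_nhds
        (show b ≠ β j from fun hh => hj (hβinj hh.symm))] with z hz _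
      exact hz
  have hne2 : ∀ᶠ z in 𝓝 b, ∀ k, z ≠ -ε k :=
    Filter.eventually_all.mpr fun k => eventually_ne_nhds (hβε i k)
  -- the key identity on the punctured neighborhood
  have key : ∀ᶠ z in 𝓝[≠] b,
      deriv (deriv h) z / h z - (deriv h z / h z) ^ 2
        = -(∑ j ∈ Finset.univ.filter (fun j => j ≠ i), 1 / (z - β j) ^ 2)
            + 2 * ∑ k, 1 / (z + ε k) ^ 2 := by
    filter_upwards [((E1.and (E2.and (E3.and (hne1.and hne2))))).filter_mono
      nhdsWithin_le_nhds, self_mem_nhdsWithin] with z hz hzb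
    obtain ⟨e1, e2, e3, hj, hk⟩ := hz
    have hzb' : z ≠ b := hzb
    have hzβ : ∀ j, z ≠ β j := by
      intro j
      rcases eq_or_ne j i with rfl | hji
      · exact hzb'
      · exact hj j hji
    have hH := H z hzβ hk
    rw [i3, i2] at hH
    have hsplit : (∑ j, 1 / (z - β j) ^ 2)
        = 1 / (z - b) ^ 2 + ∑ j ∈ Finset.univ.filter (fun j => j ≠ i), 1 / (z - β j) ^ 2 := by
      rw [Finset.filter_ne', ← Finset.add_sum_erase _ _ (Finset.mem_univ i)]
    rw [hsplit] at hH
    have hzb0 : z - b ≠ 0 := sub_ne_zero.mpr hzb'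
    have halg : deriv (deriv g) z / g z - (deriv g z / g z) ^ 2 + 1 / (z - b) ^ 2
        = deriv (deriv h) z / h z - (deriv h z / h z) ^ 2 := by
      rw [e1, e2, hgz z]
      field_simp
      ring
    rw [← halg, hH]
    ring
  -- limits
  have hcw : ContinuousAt (fun z => deriv (deriv h) z / h z - (deriv h z / h z) ^ 2) b :=
    (((analyticAt_deriv (analyticAt_deriv hhana)).continuousAt.div hhana.continuousAt hb0).sub
      (((analyticAt_deriv hhana).continuousAt.div hhana.continuousAt hb0).pow 2))
  have T1 : Tendsto (fun z => deriv (deriv h) z / h z - (deriv h z / h z) ^ 2) (𝓝[≠] b)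
      (𝓝 (deriv (deriv h) b / h b - (deriv h b / h b) ^ 2)) :=
    hcw.tendsto.mono_left nhdsWithin_le_nhds
  have hcw2 : Tendsto (fun z =>
      -(∑ j ∈ Finset.univ.filter (fun j => j ≠ i), 1 / (z - β j) ^ 2)
        + 2 * ∑ k, 1 / (z + ε k) ^ 2) (𝓝 b)
      (𝓝 (-(∑ j ∈ Finset.univ.filter (fun j => j ≠ i), 1 / (b - β j) ^ 2)
        + 2 * ∑ k, 1 / (b + ε k) ^ 2)) := by
    apply Tendsto.add
    · apply Tendsto.neg
      apply tendsto_finset_sum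
      intro j hj
      have hbj : b - β j ≠ 0 :=
        sub_ne_zero.mpr fun e => (Finset.mem_filter.mp hj).2 (hβinj e.symm)
      simp only [one_div]
      exact (((continuousAt_id.sub continuousAt_const).pow 2).inv₀ (pow_ne_zero 2 hbj)).tendsto
    · apply Tendsto.const_mul
      apply tendsto_finset_sum
      intro k _
      have hbk : b + ε k ≠ 0 := by
        intro e
        exact hβε i k (by rw [← hbdef]; linear_combination e)
      simp only [one_div]
      exact (((continuousAt_id.add continuousAt_const).pow 2).inv₀ (pow_ne_zero 2 hbk)).tendsto
  have hkey : (fun z => deriv (deriv h) z / h z - (deriv h z / h z) ^ 2)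
      =ᶠ[𝓝[≠] b] (fun z =>
        -(∑ j ∈ Finset.univ.filter (fun j => j ≠ i), 1 / (z - β j) ^ 2)
          + 2 * ∑ k, 1 / (z + ε k) ^ 2) := key
  have T2 := Filter.Tendsto.congr' hkey.symm (hcw2.mono_left nhdsWithin_le_nhds)
  have huniq := tendsto_nhds_unique T1 T2
  rw [e_h1, e_h2, hhb] at huniq
  rw [e_R3, e_R4, ← huniq]
  field_simp
  ring
end

section
/- Under the decomposition 1/(R'(z)R'(-z)(z+ε_b)^2) = ∑_i (1/(R'(-β_i)R''(β_i)))·(1/((z-β_i)(β_i+ε_b)^2) - 1/((z+β_i)(ε_b-β_i)^2)), differentiating with respect to z and evaluating at z = 0 yields ∑_{i=1}^{2d} (1/(R'(-β_i)R''(β_i)β_i^2))·( 1/((β_i+ε_b)^2) - 1/((β_i-ε_b)^2) ) = 2/(R'(0)^2 ε_b^3), assuming 0 is not a pole, R'(0)≠0, and R'(-z)|_{z=0}=R'(0). -/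
open Finset

/-- Differentiating the decomposition of `1/(R'(z)R'(-z)(z+ε_b)²)` at `z = 0` yields
`∑_i (1/(R'(-β_i)R''(β_i)β_i²))(1/(β_i+ε_b)² - 1/(β_i-ε_b)²) = 2/(R'(0)²ε_b³)`. -/
theorem stmt_7 (d : ℕ) (β : Fin (2 * d) → ℂ) (εb : ℂ) (R : ℂ → ℂ)
    (hβ0 : ∀ i, β i ≠ 0) (hεb0 : εb ≠ 0)
    (hεbβ : ∀ i, εb ≠ β i ∧ εb ≠ -β i)
    (hR0 : deriv R 0 ≠ 0)
    (hdiff : DifferentiableAt ℂ (fun z => deriv R z * deriv R (-z)) 0)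
    (heven : deriv (fun z => deriv R z * deriv R (-z)) 0 = 0)
    (H : ∀ z : ℂ, (∀ i, z ≠ β i ∧ z ≠ -β i) → z ≠ -εb →
      1 / (deriv R z * deriv R (-z) * (z + εb) ^ 2)
        = ∑ i, (1 / (deriv R (-β i) * deriv (deriv R) (β i)))
            * (1 / ((z - β i) * (β i + εb) ^ 2)
               - 1 / ((z + β i) * (εb - β i) ^ 2))) :
    ∑ i, (1 / (deriv R (-β i) * deriv (deriv R) (β i) * (β i) ^ 2))
        * (1 / (β i + εb) ^ 2 - 1 / (β i - εb) ^ 2)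
      = 2 / ((deriv R 0) ^ 2 * εb ^ 3) := by
  classical
  set g : ℂ → ℂ := fun z => deriv R z * deriv R (-z) with hgdef
  have hg0 : g 0 = deriv R 0 ^ 2 := by simp [hgdef, sq]
  have hg0ne : g 0 ≠ 0 := by rw [hg0]; exact pow_ne_zero 2 hR0
  -- derivative of the left-hand side function at 0
  have hgd : HasDerivAt g 0 0 := by
    have := hdiff.hasDerivAt
    rwa [heven] at this
  have hq : HasDerivAt (fun z : ℂ => (z + εb) ^ 2) (2 * εb) 0 := by
    have := ((hasDerivAt_id (0 : ℂ)).add_const εb).fun_pow 2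
    simpa using this
  have hprod : HasDerivAt (fun z => g z * (z + εb) ^ 2) (g 0 * (2 * εb)) 0 := by
    have := hgd.fun_mul hq
    simpa using this
  have hden : g 0 * ((0 : ℂ) + εb) ^ 2 ≠ 0 := by
    refine mul_ne_zero hg0ne (pow_ne_zero _ ?_)
    simpa using hεb0
  have hF : HasDerivAt (fun z => 1 / (g z * (z + εb) ^ 2))
      (-(g 0 * (2 * εb)) / (g 0 * ((0 : ℂ) + εb) ^ 2) ^ 2) 0 := by
    simpa only [one_div] using hprod.fun_inv hden
  -- derivatives of each summand at 0
  have hGi : ∀ i : Fin (2 * d),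
      HasDerivAt (fun z => (1 / (deriv R (-β i) * deriv (deriv R) (β i)))
          * (1 / ((z - β i) * (β i + εb) ^ 2)
             - 1 / ((z + β i) * (εb - β i) ^ 2)))
        ((1 / (deriv R (-β i) * deriv (deriv R) (β i)))
          * (-(1 * (β i + εb) ^ 2) / (((0 : ℂ) - β i) * (β i + εb) ^ 2) ^ 2
             - -(1 * (εb - β i) ^ 2) / (((0 : ℂ) + β i) * (εb - β i) ^ 2) ^ 2)) 0 := by
    intro i
    have hA : ((0 : ℂ) - β i) * (β i + εb) ^ 2 ≠ 0 := by
      refine mul_ne_zero ?_ (pow_ne_zero _ ?_)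
      · simpa using hβ0 i
      · intro h
        exact (hεbβ i).2 (by linear_combination h)
    have hB : ((0 : ℂ) + β i) * (εb - β i) ^ 2 ≠ 0 := by
      refine mul_ne_zero ?_ (pow_ne_zero _ ?_)
      · simpa using hβ0 i
      · intro h
        exact (hεbβ i).1 (by linear_combination h)
    have h1 : HasDerivAt (fun z : ℂ => (z - β i) * (β i + εb) ^ 2)
        (1 * (β i + εb) ^ 2) 0 :=
      ((hasDerivAt_id (0 : ℂ)).sub_const (β i)).mul_const _
    have h2 : HasDerivAt (fun z : ℂ => (z + β i) * (εb - β i) ^ 2)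
        (1 * (εb - β i) ^ 2) 0 :=
      ((hasDerivAt_id (0 : ℂ)).add_const (β i)).mul_const _
    have := ((h1.inv hA).sub (h2.inv hB)).const_mul
      (1 / (deriv R (-β i) * deriv (deriv R) (β i)))
    simpa [one_div] using this
  have hG : HasDerivAt (fun z => ∑ i, (1 / (deriv R (-β i) * deriv (deriv R) (β i)))
        * (1 / ((z - β i) * (β i + εb) ^ 2)
           - 1 / ((z + β i) * (εb - β i) ^ 2)))
      (∑ i, (1 / (deriv R (-β i) * deriv (deriv R) (β i)))
          * (-(1 * (β i + εb) ^ 2) / (((0 : ℂ) - β i) * (β i + εb) ^ 2) ^ 2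
             - -(1 * (εb - β i) ^ 2) / (((0 : ℂ) + β i) * (εb - β i) ^ 2) ^ 2)) 0 :=
    HasDerivAt.fun_sum (fun i _ => hGi i)
  -- the two functions agree near 0
  have hEq : (fun z => 1 / (g z * (z + εb) ^ 2)) =ᶠ[nhds (0 : ℂ)]
      (fun z => ∑ i, (1 / (deriv R (-β i) * deriv (deriv R) (β i)))
        * (1 / ((z - β i) * (β i + εb) ^ 2)
           - 1 / ((z + β i) * (εb - β i) ^ 2))) := by
    set T : Set ℂ := Set.range β ∪ Set.range (fun i => -β i) ∪ {-εb} with hT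
    have hTfin : T.Finite :=
      ((Set.finite_range β).union (Set.finite_range _)).union (Set.finite_singleton _)
    have hTo : IsOpen Tᶜ := hTfin.isClosed.isOpen_compl
    have h0T : (0 : ℂ) ∈ Tᶜ := by
      intro h0
      simp only [hT, Set.mem_union, Set.mem_range, Set.mem_singleton_iff] at h0
      rcases h0 with (⟨i, hi⟩ | ⟨i, hi⟩) | h
      · exact hβ0 i hi
      · exact hβ0 i (by linear_combination -hi)
      · exact hεb0 (by linear_combination h)
    refine Filter.eventuallyEq_of_mem (hTo.mem_nhds h0T) (fun z hz => ?_)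
    simp only [hT, Set.mem_compl_iff, Set.mem_union, Set.mem_range,
      Set.mem_singleton_iff] at hz
    push_neg at hz
    exact H z (fun i => ⟨fun h => hz.1.1 i h.symm, fun h => hz.1.2 i h.symm⟩) hz.2
  have hF2 : HasDerivAt (fun z => 1 / (g z * (z + εb) ^ 2))
      (∑ i, (1 / (deriv R (-β i) * deriv (deriv R) (β i)))
          * (-(1 * (β i + εb) ^ 2) / (((0 : ℂ) - β i) * (β i + εb) ^ 2) ^ 2
             - -(1 * (εb - β i) ^ 2) / (((0 : ℂ) + β i) * (εb - β i) ^ 2) ^ 2)) 0 :=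
    hG.congr_of_eventuallyEq hEq
  have key := hF2.unique hF
  -- final algebra
  have hsum : ∑ i, (1 / (deriv R (-β i) * deriv (deriv R) (β i) * (β i) ^ 2))
        * (1 / (β i + εb) ^ 2 - 1 / (β i - εb) ^ 2)
      = -∑ i, (1 / (deriv R (-β i) * deriv (deriv R) (β i)))
          * (-(1 * (β i + εb) ^ 2) / (((0 : ℂ) - β i) * (β i + εb) ^ 2) ^ 2
             - -(1 * (εb - β i) ^ 2) / (((0 : ℂ) + β i) * (εb - β i) ^ 2) ^ 2) := by
    rw [← Finset.sum_neg_distrib]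
    refine Finset.sum_congr rfl (fun i _ => ?_)
    have hA : (β i + εb) ≠ 0 := fun h => (hεbβ i).2 (by linear_combination h)
    have hB : (εb - β i) ≠ 0 := fun h => (hεbβ i).1 (by linear_combination h)
    have hB' : (β i - εb) ≠ 0 := fun h => (hεbβ i).1 (by linear_combination -h)
    have e1 : -(1 * (β i + εb) ^ 2) / (((0 : ℂ) - β i) * (β i + εb) ^ 2) ^ 2
        = -(1 / ((β i) ^ 2 * (β i + εb) ^ 2)) := by
      rw [zero_sub]
      field_simp [hβ0 i, hA]
    have e2 : -(1 * (εb - β i) ^ 2) / (((0 : ℂ) + β i) * (εb - β i) ^ 2) ^ 2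
        = -(1 / ((β i) ^ 2 * (εb - β i) ^ 2)) := by
      rw [zero_add]
      field_simp [hβ0 i, hB]
    rw [e1, e2]
    have hBB : (β i - εb) ^ 2 = (εb - β i) ^ 2 := by ring
    rw [hBB]
    by_cases hc : deriv R (-β i) * deriv (deriv R) (β i) = 0
    · simp [hc]
    · field_simp [hc, hβ0 i, hA, hB]
      ring
  rw [hsum, key, hg0]
  field_simp [hR0, hεb0]
  ring
end

section
/- Evaluating the partial fraction identity 1/(R'(z)R'(-z)(z+w)^2) = (terms regular at the β_i) + ∑_i (1/(R''(β_i)R'(-β_i)))·(1/((z-β_i)(w+β_i)^2) - 1/((z+β_i)(w-β_i)^2)) at (z,w)=(ε_a,ε_b) with ε_a, ε_b poles of R annihilating the left side appropriately yields: 0 = ∑_{i=1}^{2d} (1/(R'(-β_i)R''(β_i))) · ( 1/((ε_a-β_i)^2(β_i+ε_b)^2) - 1/((ε_a+β_i)^2(ε_b-β_i)^2) ), whenever the difference of the two partial fraction expansions (in z around ε_a, and symmetrically) of the symmetric function 1/(R'(z)R'(-z)(z+w)^2) is compared. -/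
open Finset Polynomial

lemma leadingCoeff_lagrange_basis {ι : Type*} [DecidableEq ι] (s : Finset ι) (v : ι → ℂ)
    (hvs : Set.InjOn v s) (i : ι) (hi : i ∈ s) :
    (Lagrange.basis s v i).leadingCoeff = Lagrange.nodalWeight s v i := by
  rw [Lagrange.basis, Polynomial.leadingCoeff_prod, Lagrange.nodalWeight]
  refine Finset.prod_congr rfl fun j hj => ?_
  have hij : v i ≠ v j := by
    rcases Finset.mem_erase.mp hj with ⟨hji, hjs⟩
    exact fun h => hji (hvs hjs hi h.symm)
  rw [Lagrange.basisDivisor, leadingCoeff_mul, leadingCoeff_C,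
    (monic_X_sub_C (v j)).leadingCoeff, mul_one]

lemma key_lagrange {ι : Type*} [DecidableEq ι] [Fintype ι] (v : ι → ℂ)
    (hv : Function.Injective v) (N : ℂ[X])
    (hN : N.degree < ((Fintype.card ι - 1 : ℕ) : WithBot ℕ)) :
    ∑ i, N.eval (v i) * Lagrange.nodalWeight (univ : Finset ι) v i = 0 := by
  have hvs : Set.InjOn v (univ : Finset ι) := fun x _ y _ h => hv h
  have hcard : #(univ : Finset ι) = Fintype.card ι := Finset.card_univ
  have hdeg : N.degree < (#(univ : Finset ι) : WithBot ℕ) := by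
    rw [hcard]
    exact lt_of_lt_of_le hN (by exact_mod_cast Nat.sub_le _ 1)
  have hint := Lagrange.eq_interpolate hvs hdeg
  have hcoeff : N.coeff (Fintype.card ι - 1) = 0 :=
    Polynomial.coeff_eq_zero_of_degree_lt hN
  rw [hint] at hcoeff
  rw [Lagrange.interpolate_apply, Polynomial.finset_sum_coeff] at hcoeff
  rw [← hcoeff]
  refine Finset.sum_congr rfl fun i hi => ?_
  rw [Polynomial.coeff_C_mul]
  congr 1
  have hnd : (Lagrange.basis univ v i).natDegree = Fintype.card ι - 1 := by
    rw [Lagrange.natDegree_basis hvs (mem_univ i), hcard]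
  rw [← hnd, Polynomial.coeff_natDegree, leadingCoeff_lagrange_basis _ _ hvs _ (mem_univ i)]

lemma derivB (d : ℕ) (β : Fin (2 * d) → ℂ) (ε : Fin d → ℂ) (R : ℂ → ℂ)
    (hβε : ∀ i n, β i ≠ ε n ∧ β i ≠ -ε n)
    (hR : ∀ z : ℂ, (∀ n, z ≠ -ε n) →
      deriv R z = (∏ i, (z - β i)) / ∏ n, (z + ε n) ^ 2) (i : Fin (2 * d)) :
    deriv (deriv R) (β i) =
      (∏ j ∈ univ.erase i, (β i - β j)) / ∏ n, (β i + ε n) ^ 2 := by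
  classical
  set P : ℂ[X] := Lagrange.nodal univ β with hP
  set Q : ℂ[X] := ∏ n, (X + C (ε n)) ^ 2 with hQ
  have hPeval : ∀ z : ℂ, P.eval z = ∏ j, (z - β j) := by
    intro z; rw [hP, Lagrange.eval_nodal]
  have hQeval : ∀ z : ℂ, Q.eval z = ∏ n, (z + ε n) ^ 2 := by
    intro z
    rw [hQ, Polynomial.eval_prod]
    exact Finset.prod_congr rfl fun n _ => by simp
  have hU : IsOpen {z : ℂ | ∀ n, z ≠ -ε n} := by
    have : {z : ℂ | ∀ n, z ≠ -ε n} = ⋂ n, {z : ℂ | z ≠ -ε n} := by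
      ext z; simp
    rw [this]
    exact isOpen_iInter_of_finite fun n => isOpen_ne
  have hmem : β i ∈ {z : ℂ | ∀ n, z ≠ -ε n} := fun n => (hβε i n).2
  have hev : deriv R =ᶠ[nhds (β i)] fun z => P.eval z / Q.eval z := by
    filter_upwards [hU.mem_nhds hmem] with z hz
    rw [hR z hz, hPeval, hQeval]
  have hQne : Q.eval (β i) ≠ 0 := by
    rw [hQeval]
    exact Finset.prod_ne_zero_iff.mpr fun n _ => pow_ne_zero _
      (fun h => (hβε i n).2 (by linear_combination h))
  have hd : deriv (deriv R) (β i) = deriv (fun z => P.eval z / Q.eval z) (β i) :=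
    hev.deriv_eq
  rw [hd, deriv_fun_div (P.differentiableAt) (Q.differentiableAt) hQne,
    Polynomial.deriv, Polynomial.deriv]
  have hP0 : P.eval (β i) = 0 := by
    rw [hPeval]
    exact Finset.prod_eq_zero (mem_univ i) (sub_self _)
  have hPd : (Polynomial.derivative P).eval (β i) = ∏ j ∈ univ.erase i, (β i - β j) := by
    rw [hP, Lagrange.eval_nodal_derivative_eval_node_eq (mem_univ i), Lagrange.eval_nodal]
  rw [hP0, hPd, ← hQeval (β i), zero_mul, sub_zero, sq]
  exact mul_div_mul_right _ _ hQne

lemma alg_step (m y p x c e f g : ℂ) (hm : m ≠ 0) (hy : y ≠ 0) (hp : p ≠ 0) (hx : x ≠ 0)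
    (hc : c ≠ 0) (he : e ≠ 0) (hf : f ≠ 0) (hg : g ≠ 0) :
    (1 / (m / y * (p / x))) * (1 / (c * e) - 1 / (f * g))
      = (x / e) * (y / c) * (p⁻¹ * m⁻¹) + (y / g) * (x / f) * (m⁻¹ * -p⁻¹) := by
  field_simp
  ring

/-- Evaluating the partial fraction identity at `(z,w) = (ε_a, ε_b)` gives the
cancellation `0 = ∑_i (1/(R'(-β_i)R''(β_i)))(1/((ε_a-β_i)²(β_i+ε_b)²)
- 1/((ε_a+β_i)²(ε_b-β_i)²))`. -/
theorem stmt_8 (d : ℕ) (β : Fin (2 * d) → ℂ) (ε : Fin d → ℂ) (R : ℂ → ℂ)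
    (a b : Fin d)
    (hβinj : Function.Injective β) (hββ : ∀ i j, β i ≠ -β j)
    (hβε : ∀ i n, β i ≠ ε n ∧ β i ≠ -ε n)
    (hR : ∀ z : ℂ, (∀ n, z ≠ -ε n) →
      deriv R z = (∏ i, (z - β i)) / ∏ n, (z + ε n) ^ 2)
    (hR' : ∀ i, deriv R (-β i) ≠ 0) (hR'' : ∀ i, deriv (deriv R) (β i) ≠ 0) :
    0 = ∑ i, (1 / (deriv R (-β i) * deriv (deriv R) (β i)))
        * (1 / ((ε a - β i) ^ 2 * (β i + ε b) ^ 2)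
           - 1 / ((ε a + β i) ^ 2 * (ε b - β i) ^ 2)) := by
  classical
  have hd : 0 < d := a.pos
  set v : Fin (2 * d) ⊕ Fin (2 * d) → ℂ := Sum.elim β (fun i => -β i) with hv_def
  have hv : Function.Injective v := by
    intro k l h
    cases k with
    | inl k => cases l with
      | inl l =>
        simp only [hv_def, Sum.elim_inl] at h
        exact congrArg Sum.inl (hβinj h)
      | inr l =>
        simp only [hv_def, Sum.elim_inl, Sum.elim_inr] at h
        exact absurd h (hββ k l)
    | inr k => cases l with
      | inl l =>
        simp only [hv_def, Sum.elim_inl, Sum.elim_inr] at h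
        exact absurd h.symm (hββ l k)
      | inr l =>
        simp only [hv_def, Sum.elim_inr, neg_inj] at h
        exact congrArg Sum.inr (hβinj h)
  set N : ℂ[X] := (∏ n ∈ univ.erase b, (X + C (ε n)) ^ 2)
      * (∏ n ∈ univ.erase a, (C (ε n) - X) ^ 2) with hN_def
  have hcard : Fintype.card (Fin (2 * d) ⊕ Fin (2 * d)) = 2 * d + 2 * d := by simp
  have hnatdeg : N.natDegree ≤ 2 * (d - 1) + 2 * (d - 1) := by
    refine le_trans (Polynomial.natDegree_mul_le) (add_le_add ?_ ?_)
    · refine le_trans (Polynomial.natDegree_prod_le _ _) ?_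
      have : ∀ n ∈ univ.erase b, (((X : ℂ[X]) + C (ε n)) ^ 2).natDegree ≤ 2 := by
        intro n _
        rw [Polynomial.natDegree_pow, Polynomial.natDegree_X_add_C]
      refine le_trans (Finset.sum_le_sum this) ?_
      rw [Finset.sum_const, Finset.card_erase_of_mem (mem_univ b), Finset.card_univ,
        Fintype.card_fin, smul_eq_mul]
      omega
    · refine le_trans (Polynomial.natDegree_prod_le _ _) ?_
      have : ∀ n ∈ univ.erase a, (((C (ε n) : ℂ[X]) - X) ^ 2).natDegree ≤ 2 := by
        intro n _
        rw [Polynomial.natDegree_pow]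
        have : ((C (ε n) : ℂ[X]) - X) = -(X - C (ε n)) := by ring
        rw [this, Polynomial.natDegree_neg, Polynomial.natDegree_X_sub_C]
      refine le_trans (Finset.sum_le_sum this) ?_
      rw [Finset.sum_const, Finset.card_erase_of_mem (mem_univ a), Finset.card_univ,
        Fintype.card_fin, smul_eq_mul]
      omega
  have hdeg : N.degree < ((Fintype.card (Fin (2 * d) ⊕ Fin (2 * d)) - 1 : ℕ) : WithBot ℕ) := by
    refine lt_of_le_of_lt (Polynomial.degree_le_natDegree) ?_
    rw [hcard]
    exact_mod_cast lt_of_le_of_lt hnatdeg (by omega)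
  have h0 := key_lagrange v hv N hdeg
  rw [Fintype.sum_sum_type, ← Finset.sum_add_distrib] at h0
  -- termwise identification
  have hmain : ∀ i : Fin (2 * d),
      (1 / (deriv R (-β i) * deriv (deriv R) (β i)))
        * (1 / ((ε a - β i) ^ 2 * (β i + ε b) ^ 2)
           - 1 / ((ε a + β i) ^ 2 * (ε b - β i) ^ 2))
      = N.eval (v (Sum.inl i)) * Lagrange.nodalWeight univ v (Sum.inl i)
        + N.eval (v (Sum.inr i)) * Lagrange.nodalWeight univ v (Sum.inr i) := by
    intro i
    set m : ℂ := ∏ j, (β i + β j) with hm_def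
    set y : ℂ := ∏ n, (ε n - β i) ^ 2 with hy_def
    set p : ℂ := ∏ j ∈ univ.erase i, (β i - β j) with hp_def
    set x : ℂ := ∏ n, (β i + ε n) ^ 2 with hx_def
    have hm : m ≠ 0 := Finset.prod_ne_zero_iff.mpr fun j _ h => hββ i j (by linear_combination h)
    have hy : y ≠ 0 := Finset.prod_ne_zero_iff.mpr fun n _ => pow_ne_zero _
      (sub_ne_zero.mpr fun h => (hβε i n).1 h.symm)
    have hp : p ≠ 0 := Finset.prod_ne_zero_iff.mpr fun j hj => sub_ne_zero.mpr
      fun h => (Finset.mem_erase.mp hj).1 (hβinj h).symm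
    have hx : x ≠ 0 := Finset.prod_ne_zero_iff.mpr fun n _ => pow_ne_zero _
      (fun h => (hβε i n).2 (by linear_combination h))
    have hc : ((ε a - β i) ^ 2 : ℂ) ≠ 0 := pow_ne_zero _
      (sub_ne_zero.mpr fun h => (hβε i a).1 h.symm)
    have he : ((β i + ε b) ^ 2 : ℂ) ≠ 0 := pow_ne_zero _
      (fun h => (hβε i b).2 (by linear_combination h))
    have hf : ((ε a + β i) ^ 2 : ℂ) ≠ 0 := pow_ne_zero _
      (fun h => (hβε i a).2 (by linear_combination h))
    have hg : ((ε b - β i) ^ 2 : ℂ) ≠ 0 := pow_ne_zero _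
      (sub_ne_zero.mpr fun h => (hβε i b).1 h.symm)
    -- value of R' at -β i
    have hneg1 : ∏ j, (-β i - β j) = m := by
      calc ∏ j, (-β i - β j) = ∏ j, (-1) * (β i + β j) :=
            Finset.prod_congr rfl fun j _ => by ring
        _ = (-1) ^ (2 * d) * m := by
            rw [Finset.prod_mul_distrib, Finset.prod_const, Finset.card_univ, Fintype.card_fin]
        _ = m := by rw [(even_two_mul d).neg_one_pow, one_mul]
    have hneg2 : ∏ j ∈ univ.erase i, (-β i + β j) = -p := by
      calc ∏ j ∈ univ.erase i, (-β i + β j)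
          = ∏ j ∈ univ.erase i, (-1) * (β i - β j) :=
            Finset.prod_congr rfl fun j _ => by ring
        _ = (-1) ^ (univ.erase i).card * p := by
            rw [Finset.prod_mul_distrib, Finset.prod_const]
        _ = -p := by
            rw [Finset.card_erase_of_mem (mem_univ i), Finset.card_univ, Fintype.card_fin]
            have hodd : Odd (2 * d - 1) := ⟨d - 1, by omega⟩
            rw [hodd.neg_one_pow, neg_one_mul]
    have hA : deriv R (-β i) = m / y := by
      rw [hR (-β i) (fun n h => (hβε i n).1 (by linear_combination -h))]
      rw [hneg1]
      congr 1
      exact Finset.prod_congr rfl fun n _ => by ring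
    have hB : deriv (deriv R) (β i) = p / x := derivB d β ε R hβε hR i
    -- nodal weights
    have herase_l : (univ : Finset (Fin (2 * d) ⊕ Fin (2 * d))).erase (Sum.inl i)
        = (univ.erase i).disjSum univ := by
      ext k; cases k <;> simp
    have herase_r : (univ : Finset (Fin (2 * d) ⊕ Fin (2 * d))).erase (Sum.inr i)
        = (univ : Finset (Fin (2 * d))).disjSum (univ.erase i) := by
      ext k; cases k <;> simp
    have hW_l : Lagrange.nodalWeight univ v (Sum.inl i) = p⁻¹ * m⁻¹ := by
      rw [Lagrange.nodalWeight, herase_l, Finset.prod_disjSum]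
      congr 1
      · rw [hp_def, ← Finset.prod_inv_distrib]
        exact Finset.prod_congr rfl fun j _ => by rw [hv_def]; simp
      · rw [hm_def, ← Finset.prod_inv_distrib]
        exact Finset.prod_congr rfl fun j _ => by rw [hv_def]; simp [sub_neg_eq_add]
    have hW_r : Lagrange.nodalWeight univ v (Sum.inr i) = m⁻¹ * -p⁻¹ := by
      rw [Lagrange.nodalWeight, herase_r, Finset.prod_disjSum]
      have e1 : ∏ j, (v (Sum.inr i) - v (Sum.inl j))⁻¹ = m⁻¹ := by
        rw [← hneg1, ← Finset.prod_inv_distrib]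
        exact Finset.prod_congr rfl fun j _ => by rw [hv_def]; simp
      have e2 : ∏ j ∈ univ.erase i, (v (Sum.inr i) - v (Sum.inr j))⁻¹ = -p⁻¹ := by
        rw [← inv_neg, ← hneg2, ← Finset.prod_inv_distrib]
        exact Finset.prod_congr rfl fun j _ => by rw [hv_def]; simp [sub_neg_eq_add]
      rw [e1, e2]
    -- evaluations of N
    have hE1 : ∏ n ∈ univ.erase b, (β i + ε n) ^ 2 = x / (β i + ε b) ^ 2 := by
      rw [eq_div_iff he, hx_def]
      exact Finset.prod_erase_mul univ _ (mem_univ b)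
    have hE2 : ∏ n ∈ univ.erase a, (ε n - β i) ^ 2 = y / (ε a - β i) ^ 2 := by
      rw [eq_div_iff hc, hy_def]
      exact Finset.prod_erase_mul univ _ (mem_univ a)
    have hE3 : ∏ n ∈ univ.erase b, (ε n - β i) ^ 2 = y / (ε b - β i) ^ 2 := by
      rw [eq_div_iff hg, hy_def]
      exact Finset.prod_erase_mul univ _ (mem_univ b)
    have hfa : ((β i + ε a) ^ 2 : ℂ) = (ε a + β i) ^ 2 := by ring
    have hE4 : ∏ n ∈ univ.erase a, (β i + ε n) ^ 2 = x / (ε a + β i) ^ 2 := by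
      rw [eq_div_iff hf, hx_def, ← hfa]
      exact Finset.prod_erase_mul univ _ (mem_univ a)
    have hNl : N.eval (v (Sum.inl i))
        = x / (β i + ε b) ^ 2 * (y / (ε a - β i) ^ 2) := by
      rw [hv_def]
      show N.eval (β i) = _
      rw [hN_def, ← hE1, ← hE2]
      simp only [eval_mul, Polynomial.eval_prod, eval_pow, eval_add, eval_sub, eval_X, eval_C]
    have hNr : N.eval (v (Sum.inr i))
        = y / (ε b - β i) ^ 2 * (x / (ε a + β i) ^ 2) := by
      rw [hv_def]
      show N.eval (-β i) = _
      rw [hN_def, ← hE3, ← hE4]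
      simp only [eval_mul, Polynomial.eval_prod, eval_pow, eval_add, eval_sub, eval_X, eval_C]
      congr 1 <;> exact Finset.prod_congr rfl fun n _ => by ring
    rw [hA, hB, hW_l, hW_r, hNl, hNr]
    exact alg_step m y p x ((ε a - β i) ^ 2) ((β i + ε b) ^ 2) ((ε a + β i) ^ 2)
      ((ε b - β i) ^ 2) hm hy hp hx hc he hf hg
  rw [Finset.sum_congr rfl fun i _ => hmain i]
  exact h0.symm
end
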